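/- Let C : D(C) ⊆ H → L²(X, μ) be the analysis operator of a lower semi-frame φ with D(C) dense, and T = C*C with m ≤ T (in form sense, m > 0). Define ψ_x = T⁻¹φ_x (weakly: ⟨f, ψ_x⟩ := ⟨T⁻¹f, φ_x⟩). Then ψ is a Bessel mapping with bound ‖T^{-1/2}‖² ≤ 1/m: for all f ∈ H, ∫ |⟨T⁻¹f, φ_x⟩|² dμ(x) = ‖T^{-1/2} f‖² ≤ (1/m)‖f‖². -/

import Mathlib

open MeasureTheory
open scoped ENNReal NNReal

local notation "⟪" x ", " y "⟫" => @inner ℂ _ _ x y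

lemma aux_lint {X : Type*} [MeasurableSpace X] (μ : Measure X) (h : X → ℂ)
    (hmeas : AEStronglyMeasurable h μ)
    (hfin : ∫⁻ x, (‖h x‖₊ : ℝ≥0∞) ^ 2 ∂μ < ∞) :
    (∫ x, h x * (starRingEnd ℂ) (h x) ∂μ) = ((∫ x, ‖h x‖ ^ 2 ∂μ : ℝ) : ℂ) ∧
    ∫⁻ x, (‖h x‖₊ : ℝ≥0∞) ^ 2 ∂μ = ENNReal.ofReal (∫ x, ‖h x‖ ^ 2 ∂μ) := by
  have hint : Integrable (fun x => ‖h x‖ ^ 2) μ := by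
    refine ⟨(hmeas.norm.pow 2), ?_⟩
    rw [HasFiniteIntegral]
    have : ∀ x, ‖‖h x‖ ^ 2‖ₑ = (‖h x‖₊ : ℝ≥0∞) ^ 2 := fun x => by
      rw [enorm_eq_nnnorm, nnnorm_pow, nnnorm_norm, ENNReal.coe_pow]
    simpa only [this] using hfin
  constructor
  · have h1 : ∀ x, h x * (starRingEnd ℂ) (h x) = ((‖h x‖ ^ 2 : ℝ) : ℂ) := fun x => by
      rw [Complex.mul_conj']
      push_cast
      ring
    simp only [h1]
    exact integral_ofReal
  · rw [MeasureTheory.ofReal_integral_eq_lintegral_ofReal hint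
      (Filter.Eventually.of_forall fun x => by positivity)]
    refine lintegral_congr fun x => ?_
    rw [ENNReal.ofReal_pow (norm_nonneg _), ofReal_norm_eq_enorm, enorm_eq_nnnorm]

/-- A densely defined operator `T` is self-adjoint: symmetric, and every weak-adjoint pair
belongs to its graph. -/
def IsSelfAdjointPMap {H : Type*} [NormedAddCommGroup H] [InnerProductSpace ℂ H]
    (T : H →ₗ.[ℂ] H) : Prop :=
  Dense (T.domain : Set H) ∧
  (∀ f g : T.domain, ⟪T f, (g : H)⟫ = ⟪(f : H), T g⟫) ∧
  (∀ g h : H, (∀ f : T.domain, ⟪T f, g⟫ = ⟪(f : H), h⟫) →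
    ∃ hg : g ∈ T.domain, T ⟨g, hg⟩ = h)

/-- for a lower semi-frame `φ` (bound `m`) with dense analysis domain and
generalized frame operator `T = C*C` (self-adjoint, realizing the form
`Ω(f,g) = ∫ ⟨f,φ_x⟩⟨φ_x,g⟩ dμ`), with bounded inverse `T⁻¹` and positive self-adjoint
square root `T^{-1/2}` of `T⁻¹`, the function `ψ = T⁻¹φ` is Bessel with bound `1/m`:
`∫ |⟨T⁻¹f, φ_x⟩|² dμ = ‖T^{-1/2}f‖² ≤ (1/m)‖f‖²` for every `f ∈ H`. -/
theorem stmt8 {H X : Type*}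
    [NormedAddCommGroup H] [InnerProductSpace ℂ H] [CompleteSpace H]
    [MeasurableSpace X] (μ : Measure X) (φ : X → H)
    (hwm : ∀ f : H, AEStronglyMeasurable (fun x => ⟪f, φ x⟫) μ)
    (m : ℝ) (hm : 0 < m)
    (hlow : ∀ f : H,
      ENNReal.ofReal (m * ‖f‖ ^ 2) ≤ ∫⁻ x, (‖⟪f, φ x⟫‖₊ : ℝ≥0∞) ^ 2 ∂μ)
    (hdense : Dense {f : H | ∫⁻ x, (‖⟪f, φ x⟫‖₊ : ℝ≥0∞) ^ 2 ∂μ < ∞})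
    (T : H →ₗ.[ℂ] H) (hsa : IsSelfAdjointPMap T)
    (hTdom : ∀ f : T.domain, ∫⁻ x, (‖⟪(f : H), φ x⟫‖₊ : ℝ≥0∞) ^ 2 ∂μ < ∞)
    (hT : ∀ (f : T.domain) (g : H), ∫⁻ x, (‖⟪g, φ x⟫‖₊ : ℝ≥0∞) ^ 2 ∂μ < ∞ →
      ⟪T f, g⟫ = ∫ x, ⟪(f : H), φ x⟫ * ⟪φ x, g⟫ ∂μ)
    (Tinv : H →L[ℂ] H)
    (hmem : ∀ g : H, Tinv g ∈ T.domain)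
    (hright : ∀ g : H, T ⟨Tinv g, hmem g⟩ = g)
    (hleft : ∀ f : T.domain, Tinv (T f) = (f : H))
    (Tinvhalf : H →L[ℂ] H) (hsahalf : IsSelfAdjoint Tinvhalf)
    (hposhalf : ∀ f : H, 0 ≤ (⟪Tinvhalf f, f⟫).re)
    (hsqr : ∀ f : H, Tinvhalf (Tinvhalf f) = Tinv f) :
    ∀ f : H,
      ∫⁻ x, (‖⟪Tinv f, φ x⟫‖₊ : ℝ≥0∞) ^ 2 ∂μ = ENNReal.ofReal (‖Tinvhalf f‖ ^ 2) ∧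
      ‖Tinvhalf f‖ ^ 2 ≤ (1 / m) * ‖f‖ ^ 2 := by
  intro f
  set gT : T.domain := ⟨Tinv f, hmem f⟩ with hgT
  have hfin : ∫⁻ x, (‖⟪Tinv f, φ x⟫‖₊ : ℝ≥0∞) ^ 2 ∂μ < ∞ := hTdom gT
  obtain ⟨he1, he2⟩ := aux_lint μ (fun x => ⟪Tinv f, φ x⟫) (hwm _) hfin
  have hsym : ∀ x y : H, ⟪Tinvhalf x, y⟫ = ⟪x, Tinvhalf y⟫ :=
    ContinuousLinearMap.isSelfAdjoint_iff_isSymmetric.mp hsahalf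
  have hhalf : ⟪f, Tinv f⟫ = ((‖Tinvhalf f‖ ^ 2 : ℝ) : ℂ) := by
    rw [← hsqr f, ← hsym, inner_self_eq_norm_sq_to_K]
    push_cast
    rfl
  have hTeq : ⟪f, Tinv f⟫ = ((∫ x, ‖⟪Tinv f, φ x⟫‖ ^ 2 ∂μ : ℝ) : ℂ) := by
    have h0 := hT gT (Tinv f) hfin
    rw [hgT, hright f] at h0
    rw [h0, ← he1]
    refine integral_congr_ae (Filter.Eventually.of_forall fun x => ?_)
    simp [inner_conj_symm]
  have hr : (∫ x, ‖⟪Tinv f, φ x⟫‖ ^ 2 ∂μ : ℝ) = ‖Tinvhalf f‖ ^ 2 := by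
    have := hTeq.symm.trans hhalf
    exact_mod_cast this
  refine ⟨by rw [he2, hr], ?_⟩
  set a : ℝ := ‖Tinvhalf f‖ ^ 2 with ha
  have ha0 : 0 ≤ a := sq_nonneg _
  have hA : m * ‖Tinv f‖ ^ 2 ≤ a := by
    have := hlow (Tinv f)
    rw [he2, hr] at this
    exact (ENNReal.ofReal_le_ofReal_iff ha0).mp this
  have hCS : a ≤ ‖f‖ * ‖Tinv f‖ := by
    calc a = ‖⟪f, Tinv f⟫‖ := by
            rw [hhalf, Complex.norm_real, Real.norm_of_nonneg ha0]
      _ ≤ ‖f‖ * ‖Tinv f‖ := norm_inner_le_norm _ _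
  rcases eq_or_lt_of_le ha0 with h0 | h0
  · rw [← h0]; positivity
  · rw [div_mul_eq_mul_div, le_div_iff₀ hm, one_mul]
    nlinarith [sq_nonneg (‖f‖ * ‖Tinv f‖ - a), norm_nonneg f, norm_nonneg (Tinv f)]
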